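/- Consider a heterogeneous game Γ(n,T,x,y,z) with y > 0 and z > 0. Suppose α* is a symmetric Nash equilibrium taking exactly two distinct values a_1 < a_2 on T, with T_1 = {t : α*_t = a_1}, T_2 = {t : α*_t = a_2}, X_1 = ∑_{t∈T_1} x_t, X_2 = ∑_{t∈T_2} x_t. If a_2 = 1 and 0 < a_1 < 1, then a_1 = ((n−1)·ζ − n·X_2)/(n·X_1 − 1) and X_2 < (1 − 1/n)·ζ; if a_1 = 0 and 0 < a_2 < 1, then a_2 = (n−1)·ζ/(n·X_2 − 1) and X_2 > (1 − 1/n)·ζ + 1/n. -/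

import Mathlib

open Finset

noncomputable def U {T : Type*} [Fintype T] (n : ℕ) (x : T → ℝ) (y z : ℝ)
    (α β : T → ℝ) : ℝ :=
  z * ∑ j, x j * β j +
    ∑ j, (x j / ((n : ℝ) - 1)) *
      (((n : ℝ) - 1) * y + (y + z) * β j - (n : ℝ) * (y + z) * ∑ i, x i * β i) * α j

def IsStrategy {T : Type*} (α : T → ℝ) : Prop :=
  ∀ t, α t ∈ Set.Icc (0 : ℝ) 1

def IsSymNash {T : Type*} [Fintype T] (n : ℕ) (x : T → ℝ) (y z : ℝ)
    (α : T → ℝ) : Prop :=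
  IsStrategy α ∧ ∀ β : T → ℝ, IsStrategy β → U n x y z β α ≤ U n x y z α α

lemma U_sub {T : Type*} [Fintype T] (n : ℕ) (x : T → ℝ) (y z : ℝ) (α β : T → ℝ) :
    U n x y z β α - U n x y z α α =
      ∑ j, (x j / ((n : ℝ) - 1)) *
        (((n : ℝ) - 1) * y + (y + z) * α j - (n : ℝ) * (y + z) * ∑ i, x i * α i) *
        (β j - α j) := by
  simp only [U]
  rw [add_sub_add_left_eq_sub, ← Finset.sum_sub_distrib]
  exact Finset.sum_congr rfl fun j _ => by ring

lemma foc {T : Type*} [Fintype T] (n : ℕ) (x : T → ℝ) (y z : ℝ) (α : T → ℝ)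
    (hn : (1 : ℝ) < n) (hNE : IsSymNash n x y z α) (t : T) (hxp : 0 < x t)
    (h0 : 0 < α t) (h1 : α t < 1) :
    ((n : ℝ) - 1) * y + (y + z) * α t - (n : ℝ) * (y + z) * ∑ i, x i * α i = 0 := by
  classical
  have hd : 0 < x t / ((n : ℝ) - 1) := div_pos hxp (by linarith)
  have key : ∀ v ∈ Set.Icc (0:ℝ) 1,
      (x t / ((n : ℝ) - 1)) *
        (((n : ℝ) - 1) * y + (y + z) * α t - (n : ℝ) * (y + z) * ∑ i, x i * α i) *
        (v - α t) ≤ 0 := by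
    intro v hv
    have hβ : IsStrategy (Function.update α t v) := by
      intro s
      rcases eq_or_ne s t with rfl | hs
      · simpa using hv
      · simpa [Function.update_of_ne hs] using hNE.1 s
    have hle := hNE.2 _ hβ
    have heq := U_sub n x y z α (Function.update α t v)
    rw [Fintype.sum_eq_single t (fun j hj => by simp [Function.update_of_ne hj])] at heq
    simp only [Function.update_self] at heq
    linarith
  have k1 := key 1 ⟨by norm_num, le_refl 1⟩
  have k0 := key 0 ⟨le_refl 0, by norm_num⟩
  set c := ((n : ℝ) - 1) * y + (y + z) * α t - (n : ℝ) * (y + z) * ∑ i, x i * α i with hc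
  have hle : c ≤ 0 := by
    by_contra h
    push_neg at h
    have hp : 0 < x t / ((n : ℝ) - 1) * c * (1 - α t) :=
      mul_pos (mul_pos hd h) (by linarith)
    linarith
  have hge : 0 ≤ c := by
    by_contra h
    push_neg at h
    have hp : 0 < x t / ((n : ℝ) - 1) * (-c) * (α t) :=
      mul_pos (mul_pos hd (by linarith)) h0
    nlinarith [k0, hp]
  linarith

theorem stmt17 {T : Type*} [Fintype T] (hT : 2 ≤ Fintype.card T)
    (n : ℕ) (x : T → ℝ) (hx : ∑ t, x t = 1)
    (hxt : ∀ t : T, 1 < (n : ℝ) * x t ∧ (n : ℝ) * x t < n)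
    (y z : ℝ) (hy : 0 < y) (hz : 0 < z) (α : T → ℝ) (hNE : IsSymNash n x y z α)
    (a1 a2 : ℝ) (h12 : a1 < a2)
    (hval : ∀ t : T, α t = a1 ∨ α t = a2)
    (h1 : ∃ t : T, α t = a1) (h2 : ∃ t : T, α t = a2) :
    ((a2 = 1 ∧ 0 < a1 ∧ a1 < 1) →
        a1 = (((n : ℝ) - 1) * (y / (y + z)) -
                (n : ℝ) * ∑ t ∈ Finset.univ.filter (fun t => α t = a2), x t) /
             ((n : ℝ) * ∑ t ∈ Finset.univ.filter (fun t => α t = a1), x t - 1) ∧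
        ∑ t ∈ Finset.univ.filter (fun t => α t = a2), x t <
          (1 - 1 / (n : ℝ)) * (y / (y + z))) ∧
    ((a1 = 0 ∧ 0 < a2 ∧ a2 < 1) →
        a2 = ((n : ℝ) - 1) * (y / (y + z)) /
             ((n : ℝ) * ∑ t ∈ Finset.univ.filter (fun t => α t = a2), x t - 1) ∧
        (1 - 1 / (n : ℝ)) * (y / (y + z)) + 1 / (n : ℝ) <
          ∑ t ∈ Finset.univ.filter (fun t => α t = a2), x t) := by
  obtain ⟨t1, ht1⟩ := h1
  obtain ⟨t2, ht2⟩ := h2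
  have hn1 : (1:ℝ) < n := by have h := hxt t1; linarith [h.1, h.2]
  have hn0 : (0:ℝ) < n := by linarith
  have hxpos : ∀ t, 0 < x t := by
    intro t
    have h := hxt t
    nlinarith [h.1, h.2]
  have hne : a1 ≠ a2 := ne_of_lt h12
  set X1 := ∑ t ∈ Finset.univ.filter (fun t => α t = a1), x t with hX1def
  set X2 := ∑ t ∈ Finset.univ.filter (fun t => α t = a2), x t with hX2def
  have hcompl : Finset.univ.filter (fun t => ¬ α t = a1) =
      Finset.univ.filter (fun t => α t = a2) := by
    ext t
    simp only [mem_filter, mem_univ, true_and]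
    constructor
    · intro h; rcases hval t with h' | h'
      · exact absurd h' h
      · exact h'
    · intro h h'; exact hne (h'.symm.trans h)
  have hS : ∑ i, x i * α i = X1 * a1 + X2 * a2 := by
    rw [← Finset.sum_filter_add_sum_filter_not Finset.univ (fun t => α t = a1)
      (fun i => x i * α i), hcompl, hX1def, hX2def, Finset.sum_mul, Finset.sum_mul]
    congr 1
    · exact Finset.sum_congr rfl fun i hi => by rw [(mem_filter.mp hi).2]
    · exact Finset.sum_congr rfl fun i hi => by rw [(mem_filter.mp hi).2]
  have ht1m : t1 ∈ Finset.univ.filter (fun t => α t = a1) := by simp [ht1]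
  have ht2m : t2 ∈ Finset.univ.filter (fun t => α t = a2) := by simp [ht2]
  have hX1le : x t1 ≤ X1 := Finset.single_le_sum (fun i _ => (hxpos i).le) ht1m
  have hX2le : x t2 ≤ X2 := Finset.single_le_sum (fun i _ => (hxpos i).le) ht2m
  have hX1gt : 1 < (n:ℝ) * X1 := by nlinarith [(hxt t1).1, hX1le, hn0]
  have hX2gt : 1 < (n:ℝ) * X2 := by nlinarith [(hxt t2).1, hX2le, hn0]
  have hyz : (0:ℝ) < y + z := by linarith
  have hyzne : y + z ≠ 0 := ne_of_gt hyz
  constructor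
  · rintro ⟨ha2, ha1p, ha1l⟩
    have hfoc := foc n x y z α hn1 hNE t1 (hxpos t1)
      (by rw [ht1]; exact ha1p) (by rw [ht1]; exact ha1l)
    rw [hS, ht1, ha2] at hfoc
    have hden : (n:ℝ) * X1 - 1 ≠ 0 := ne_of_gt (by linarith)
    have key : a1 * ((n:ℝ) * X1 - 1) * (y + z) = ((n:ℝ) - 1) * y - (n:ℝ) * X2 * (y + z) := by
      linear_combination -hfoc
    constructor
    · rw [eq_div_iff hden]
      field_simp
      linear_combination key
    · have hpos : 0 < a1 * ((n:ℝ) * X1 - 1) * (y + z) :=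
        mul_pos (mul_pos ha1p (by linarith)) hyz
      rw [show (1 - 1/(n:ℝ)) * (y/(y+z)) = (((n:ℝ)-1)*y)/((n:ℝ)*(y+z)) by
        field_simp, lt_div_iff₀ (by positivity)]
      nlinarith [key, hpos]
  · rintro ⟨ha1, ha2p, ha2l⟩
    have hfoc := foc n x y z α hn1 hNE t2 (hxpos t2)
      (by rw [ht2]; exact ha2p) (by rw [ht2]; exact ha2l)
    rw [hS, ht2, ha1] at hfoc
    have hden : (n:ℝ) * X2 - 1 ≠ 0 := ne_of_gt (by linarith)
    have key : a2 * ((n:ℝ) * X2 - 1) * (y + z) = ((n:ℝ) - 1) * y := by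
      linear_combination -hfoc
    constructor
    · rw [eq_div_iff hden]
      field_simp
      linear_combination key
    · have hD : 0 < ((n:ℝ) * X2 - 1) * (y + z) := mul_pos (by linarith) hyz
      rw [show (1 - 1/(n:ℝ)) * (y/(y+z)) + 1/(n:ℝ) = (((n:ℝ)-1)*y + (y+z))/((n:ℝ)*(y+z)) by
        field_simp, div_lt_iff₀ (by positivity)]
      nlinarith [key, hD, mul_lt_mul_of_pos_right ha2l hD]
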